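/- arXiv:1503.01270 — 2 statements merged into one kernel-verified Lean document; each statement's English description precedes it below -/
import Mathlib

section
/- Let μ̄ be a shift-invariant probability measure on the two-sided shift Σ^± = {1,…,m}^ℤ satisfying the quasi-Bernoulli property: there exists C > 0 such that C⁻¹ μ̄[a_{−n}⋯a_k] ≤ μ̄[a_{−n}⋯a₀]·μ̄[a₁⋯a_k] ≤ C μ̄[a_{−n}⋯a_k] for all cylinders. Define μ̃ on cylinders by μ̃[a_{−n}⋯a_k] = μ̄[a_{−n}⋯a₀]·μ̄[a₁⋯a_k]. Then μ̃ extends to a Borel measure on Σ^± that is equivalent (mutually absolutely continuous) to μ̄. -/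
open MeasureTheory
open scoped ENNReal

/-- The left shift on the two-sided shift space `{1,…,m}^ℤ`. -/
def shiftZ {m : ℕ} (x : ℤ → Fin m) : ℤ → Fin m := fun i => x (i + 1)

/-- The cylinder of sequences agreeing with `w` on coordinates `j` through `l`. -/
def cylZ {m : ℕ} (j l : ℤ) (w : ℤ → Fin m) : Set (ℤ → Fin m) :=
  {x | ∀ i : ℤ, j ≤ i → i ≤ l → x i = w i}

lemma measurableSet_cylZ {m : ℕ} (j l : ℤ) (w : ℤ → Fin m) :
    MeasurableSet (cylZ j l w) := by
  have h : cylZ j l w = ⋂ i : ℤ, {x : ℤ → Fin m | j ≤ i → i ≤ l → x i = w i} := by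
    ext x; simp [cylZ]
  rw [h]
  refine MeasurableSet.iInter fun i => ?_
  by_cases h1 : j ≤ i
  · by_cases h2 : i ≤ l
    · have : {x : ℤ → Fin m | j ≤ i → i ≤ l → x i = w i}
          = (fun x : ℤ → Fin m => x i) ⁻¹' {w i} := by
        ext x; simp [h1, h2]
      rw [this]
      exact measurable_pi_apply i (measurableSet_singleton _)
    · have : {x : ℤ → Fin m | j ≤ i → i ≤ l → x i = w i} = Set.univ := by
        ext x; simp [h2]
      rw [this]; exact MeasurableSet.univ
  · have : {x : ℤ → Fin m | j ≤ i → i ≤ l → x i = w i} = Set.univ := by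
      ext x; simp [h1]
    rw [this]; exact MeasurableSet.univ

lemma self_mem_cylZ {m : ℕ} (j l : ℤ) (w : ℤ → Fin m) : w ∈ cylZ j l w :=
  fun _ _ _ => rfl

lemma exists_cyl_subset {m : ℕ} {U : Set (ℤ → Fin m)} (hU : IsOpen U)
    {x : ℤ → Fin m} (hx : x ∈ U) : ∃ n : ℕ, cylZ (-(n : ℤ)) (n : ℤ) x ⊆ U := by
  obtain ⟨I, u, hIu, hsub⟩ := isOpen_pi_iff.1 hU x hx
  refine ⟨I.sup (fun i => i.natAbs), fun y hy => hsub ?_⟩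
  intro i hi
  have hle : i.natAbs ≤ I.sup (fun i => i.natAbs) := Finset.le_sup hi
  have h1 : -((I.sup (fun i => i.natAbs) : ℕ) : ℤ) ≤ i := by omega
  have h2 : i ≤ ((I.sup (fun i => i.natAbs) : ℕ) : ℤ) := by omega
  rw [hy i h1 h2]
  exact (hIu i hi).2

lemma countable_range_cyl {m : ℕ} (n : ℕ) :
    (Set.range fun x : ℤ → Fin m => cylZ (-(n : ℤ)) (n : ℤ) x).Countable := by
  have hsub : (Set.range fun x : ℤ → Fin m => cylZ (-(n : ℤ)) (n : ℤ) x)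
      ⊆ Set.range (fun v : {i : ℤ // i ∈ Finset.Icc (-(n : ℤ)) (n : ℤ)} → Fin m =>
          {x : ℤ → Fin m | ∀ i : ℤ, ∀ h : i ∈ Finset.Icc (-(n : ℤ)) (n : ℤ), x i = v ⟨i, h⟩}) := by
    rintro _ ⟨x, rfl⟩
    refine ⟨fun i => x i.1, ?_⟩
    ext y
    simp only [cylZ, Set.mem_setOf_eq]
    constructor
    · intro h i h1 h2
      exact h i (Finset.mem_Icc.2 ⟨h1, h2⟩)
    · intro h i hi
      exact h i (Finset.mem_Icc.1 hi).1 (Finset.mem_Icc.1 hi).2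
  exact (Set.countable_range _).mono hsub

lemma cyl_subset_of_mem {m : ℕ} {n k : ℕ} (hnk : n ≤ k) {x y z : ℤ → Fin m}
    (hzx : z ∈ cylZ (-(n : ℤ)) (n : ℤ) x) (hzy : z ∈ cylZ (-(k : ℤ)) (k : ℤ) y) :
    cylZ (-(k : ℤ)) (k : ℤ) y ⊆ cylZ (-(n : ℤ)) (n : ℤ) x := by
  intro w hw i h1 h2
  have h1' : -(k : ℤ) ≤ i := by omega
  have h2' : i ≤ (k : ℤ) := by omega
  rw [hw i h1' h2', ← hzy i h1' h2', hzx i h1 h2]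

lemma cyl_eq_of_mem {m : ℕ} {n : ℕ} {x y : ℤ → Fin m}
    (hy : y ∈ cylZ (-(n : ℤ)) (n : ℤ) x) :
    cylZ (-(n : ℤ)) (n : ℤ) y = cylZ (-(n : ℤ)) (n : ℤ) x :=
  subset_antisymm (cyl_subset_of_mem le_rfl hy (self_mem_cylZ _ _ _))
    (cyl_subset_of_mem le_rfl (self_mem_cylZ _ _ _) hy)

lemma ac_of_open_le {m : ℕ} {ν ρ : Measure (ℤ → Fin m)} [IsFiniteMeasure ρ]
    {C : ℝ≥0∞} (hC0 : 0 < C) (hCtop : C ≠ ⊤)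
    (h : ∀ U : Set (ℤ → Fin m), IsOpen U → ν U ≤ C * ρ U) : ν ≪ ρ := by
  refine Measure.AbsolutelyContinuous.mk fun s hs hρs => ?_
  refine le_antisymm ?_ zero_le
  refine ENNReal.le_of_forall_pos_le_add fun ε hε _ => ?_
  have hεC : (0 : ℝ≥0∞) < C⁻¹ * ε := by
    refine ENNReal.mul_pos (by simp [hCtop]) ?_
    exact_mod_cast hε.ne'
  have hlt : ρ s < C⁻¹ * ε := by rw [hρs]; exact hεC
  obtain ⟨U, hsU, hUopen, hUlt⟩ := Set.exists_isOpen_lt_of_lt s _ hlt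
  have : ν s ≤ C * (C⁻¹ * ε) :=
    (measure_mono hsU).trans ((h U hUopen).trans (mul_le_mul_right hUlt.le C))
  rw [← mul_assoc, ENNReal.mul_inv_cancel hC0.ne' hCtop, one_mul] at this
  simpa using this

/-- If `μ̄` is a shift-invariant quasi-Bernoulli probability measure on `{1,…,m}^ℤ`
(with constant `C`), then the assignment
`μ̃[a_{-n}⋯a_k] = μ̄[a_{-n}⋯a₀] ⬝ μ̄[a₁⋯a_k]` on cylinders extends to a Borel measure
on `{1,…,m}^ℤ` that is mutually absolutely continuous with `μ̄`. -/
theorem stmt6 {m : ℕ} (μ : Measure (ℤ → Fin m)) [IsProbabilityMeasure μ]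
    (hinv : MeasurePreserving (shiftZ (m := m)) μ μ)
    (C : ℝ≥0∞) (hC0 : 0 < C) (hCtop : C ≠ ⊤)
    (hqb : ∀ (n k : ℕ) (w : ℤ → Fin m),
      C⁻¹ * μ (cylZ (-(n : ℤ)) k w) ≤ μ (cylZ (-(n : ℤ)) 0 w) * μ (cylZ 1 k w) ∧
      μ (cylZ (-(n : ℤ)) 0 w) * μ (cylZ 1 k w) ≤ C * μ (cylZ (-(n : ℤ)) k w)) :
    ∃ μt : Measure (ℤ → Fin m),
      (∀ (n k : ℕ) (w : ℤ → Fin m),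
        μt (cylZ (-(n : ℤ)) k w) = μ (cylZ (-(n : ℤ)) 0 w) * μ (cylZ 1 k w)) ∧
      μt ≪ μ ∧ μ ≪ μt := by
  classical
  set Sp : ℕ → (ℤ → Fin m) → Set (ℤ → Fin m) :=
    fun n x => cylZ (-(n : ℤ)) (n : ℤ) x with hSp
  set g : (ℤ → Fin m) × (ℤ → Fin m) → (ℤ → Fin m) :=
    fun p i => if i ≤ 0 then p.1 i else p.2 i with hg
  have hgm : Measurable g := by
    apply measurable_pi_lambda
    intro i
    by_cases h : i ≤ 0
    · simpa only [hg, h, if_true, Function.comp_def] using (measurable_pi_apply i).comp measurable_fst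
    · simpa only [hg, h, if_false, Function.comp_def] using (measurable_pi_apply i).comp measurable_snd
  set μt := Measure.map g (μ.prod μ) with hμt
  have hpre : ∀ (n k : ℕ) (w : ℤ → Fin m),
      g ⁻¹' (cylZ (-(n : ℤ)) k w) = (cylZ (-(n : ℤ)) 0 w) ×ˢ (cylZ 1 k w) := by
    intro n k w
    ext ⟨y, z⟩
    simp only [Set.mem_preimage, Set.mem_prod, cylZ, Set.mem_setOf_eq, hg]
    constructor
    · intro h
      constructor
      · intro i h1 h2
        have := h i h1 (by omega)
        simpa [if_pos h2] using this
      · intro i h1 h2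
        have := h i (by omega) h2
        simpa [if_neg (by omega : ¬ i ≤ 0)] using this
    · rintro ⟨hy, hz⟩ i h1 h2
      by_cases h0 : i ≤ 0
      · simpa [h0] using hy i h1 h0
      · simpa [h0] using hz i (by omega) h2
  have hcyl : ∀ (n k : ℕ) (w : ℤ → Fin m),
      μt (cylZ (-(n : ℤ)) k w) = μ (cylZ (-(n : ℤ)) 0 w) * μ (cylZ 1 k w) := by
    intro n k w
    rw [hμt, Measure.map_apply hgm (measurableSet_cylZ _ _ _), hpre, Measure.prod_prod]
  have hprob : IsProbabilityMeasure μt := Measure.isProbabilityMeasure_map hgm.aemeasurable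
  have hle1 : ∀ (n : ℕ) (x : ℤ → Fin m), μt (Sp n x) ≤ C * μ (Sp n x) := by
    intro n x
    rw [hSp]
    rw [hcyl n n x]
    exact (hqb n n x).2
  have hle2 : ∀ (n : ℕ) (x : ℤ → Fin m), μ (Sp n x) ≤ C * μt (Sp n x) := by
    intro n x
    have h := (hqb n n x).1
    rw [← hcyl n n x] at h
    calc μ (Sp n x) = C * (C⁻¹ * μ (Sp n x)) := by
          rw [← mul_assoc, ENNReal.mul_inv_cancel hC0.ne' hCtop, one_mul]
      _ ≤ C * μt (Sp n x) := mul_le_mul_right h C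
  have key : ∀ (ν ρ : Measure (ℤ → Fin m)),
      (∀ (n : ℕ) (x : ℤ → Fin m), ν (Sp n x) ≤ C * ρ (Sp n x)) →
      ∀ U : Set (ℤ → Fin m), IsOpen U → ν U ≤ C * ρ U := by
    intro ν ρ hνρ U hU
    set N : (ℤ → Fin m) → ℕ :=
      fun x => if h : ∃ n : ℕ, Sp n x ⊆ U then Nat.find h else 0 with hN
    have hNspec : ∀ x ∈ U, Sp (N x) x ⊆ U := by
      intro x hx
      have h : ∃ n : ℕ, Sp n x ⊆ U := exists_cyl_subset hU hx
      simp only [hN, dif_pos h]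
      exact Nat.find_spec h
    have hNmin : ∀ x ∈ U, ∀ k : ℕ, Sp k x ⊆ U → N x ≤ k := by
      intro x hx k hk
      have h : ∃ n : ℕ, Sp n x ⊆ U := exists_cyl_subset hU hx
      simp only [hN, dif_pos h]
      exact Nat.find_min' h hk
    set D := (fun x => Sp (N x) x) '' U with hD
    have hDcyl : ∀ t ∈ D, ∃ (n : ℕ) (x : ℤ → Fin m), t = Sp n x := by
      rintro t ⟨x, hx, rfl⟩; exact ⟨_, _, rfl⟩
    have hDsub : ∀ t ∈ D, t ⊆ U := by
      rintro t ⟨x, hx, rfl⟩; exact hNspec x hx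
    have hDunion : ⋃₀ D = U := by
      apply subset_antisymm (Set.sUnion_subset hDsub)
      intro x hx
      exact ⟨Sp (N x) x, ⟨x, hx, rfl⟩, self_mem_cylZ _ _ _⟩
    have hDcount : D.Countable := by
      have hsub : D ⊆ ⋃ n : ℕ, Set.range (fun x : ℤ → Fin m => cylZ (-(n : ℤ)) (n : ℤ) x) := by
        rintro t ⟨x, hx, rfl⟩
        exact Set.mem_iUnion.2 ⟨N x, ⟨x, rfl⟩⟩
      exact (Set.countable_iUnion fun n => countable_range_cyl n).mono hsub
    have hDmeas : ∀ t ∈ D, MeasurableSet t := by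
      rintro t ⟨x, hx, rfl⟩; exact measurableSet_cylZ _ _ _
    have hkey : ∀ x ∈ U, ∀ y ∈ U, N x ≤ N y → ∀ z, z ∈ Sp (N x) x → z ∈ Sp (N y) y →
        Sp (N x) x = Sp (N y) y := by
      intro x hx y hy hle z hz1 hz2
      have hsub : Sp (N y) y ⊆ Sp (N x) x := cyl_subset_of_mem hle hz1 hz2
      have hyx : y ∈ Sp (N x) x := hsub (self_mem_cylZ _ _ _)
      have heq : Sp (N x) y = Sp (N x) x := cyl_eq_of_mem hyx
      have h1 : N y ≤ N x := hNmin y hy (N x) (heq ▸ hNspec x hx)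
      have h2 : N x = N y := le_antisymm hle h1
      rw [← heq, h2]
    have hDdisj : D.Pairwise Disjoint := by
      rintro t1 ⟨x, hx, rfl⟩ t2 ⟨y, hy, rfl⟩ hne
      rw [Set.disjoint_left]
      intro z hz1 hz2
      apply hne
      rcases le_total (N x) (N y) with hle | hle
      · exact hkey x hx y hy hle z hz1 hz2
      · exact (hkey y hy x hx hle z hz2 hz1).symm
    calc ν U = ν (⋃₀ D) := by rw [hDunion]
      _ = ∑' t : D, ν t := measure_sUnion hDcount hDdisj hDmeas
      _ ≤ ∑' t : D, C * ρ t := by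
          refine ENNReal.tsum_le_tsum fun t => ?_
          obtain ⟨n, x, ht⟩ := hDcyl t.1 t.2
          rw [ht]
          exact hνρ n x
      _ = C * ∑' t : D, ρ t := ENNReal.tsum_mul_left
      _ = C * ρ U := by rw [← measure_sUnion hDcount hDdisj hDmeas, hDunion]
  refine ⟨μt, hcyl, ?_, ?_⟩
  · exact ac_of_open_le hC0 hCtop (key μt μ hle1)
  · exact ac_of_open_le hC0 hCtop (key μ μt hle2)
end

section
/- Let (X, ν, T) be an ergodic measure-preserving system, let d : X × ℕ → ℝ be measurable, and suppose there exist sets G_{κ,ε} ⊆ X for κ, ε > 0 with ν(G_{κ,ε}) → 1 as κ → 0 (for each fixed ε), and a function r : X × ℕ → (0,∞) with r(x,n) → 0 as n → ∞ for each x, such that whenever r(x,n) < κ and Tⁿx ∈ G_{κ,ε} one has |d(x,n) − 1| < ε. Then for ν-almost every x and every ε > 0, the set G(x,ε) := {n ∈ ℕ : |d(x,n) − 1| < ε} has natural density 1. -/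
open MeasureTheory Filter Topology

namespace Stmt9Aux

noncomputable def maxBirk {X : Type*} (T : X → X) (f : X → ℝ) : ℕ → X → ℝ
  | 0 => fun _ => 0
  | (N+1) => fun x => max 0 (f x + maxBirk T f N (T x))

variable {X : Type*} [MeasurableSpace X] {T : X → X} {f : X → ℝ}

lemma maxBirk_nonneg : ∀ N x, 0 ≤ maxBirk T f N x
  | 0, x => le_refl 0
  | (N+1), x => le_max_left 0 _

lemma maxBirk_succ (N : ℕ) (x : X) :
    maxBirk T f (N+1) x = max 0 (f x + maxBirk T f N (T x)) := rfl

lemma maxBirk_mono : ∀ N x, maxBirk T f N x ≤ maxBirk T f (N+1) x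
  | 0, x => maxBirk_nonneg 1 x
  | (N+1), x => by
      rw [maxBirk_succ, maxBirk_succ]
      exact max_le_max le_rfl (add_le_add_right (maxBirk_mono N (T x)) _)

lemma sum_le_maxBirk : ∀ N, ∀ n ≤ N, ∀ x : X,
    (∑ i ∈ Finset.range n, f (T^[i] x)) ≤ maxBirk T f N x
  | 0, n, hn, x => by
      interval_cases n
      simp [maxBirk]
  | (N+1), n, hn, x => by
      match n with
      | 0 => simpa using maxBirk_nonneg (T := T) (f := f) (N+1) x
      | (m+1) =>
          rw [Finset.sum_range_succ']
          simp only [Function.iterate_succ_apply, Function.iterate_zero_apply]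
          rw [maxBirk_succ]
          calc (∑ i ∈ Finset.range m, f (T^[i] (T x))) + f x
              ≤ maxBirk T f N (T x) + f x :=
                add_le_add_left (sum_le_maxBirk N m (Nat.succ_le_succ_iff.mp hn) (T x)) _
            _ = f x + maxBirk T f N (T x) := add_comm _ _
            _ ≤ _ := le_max_right _ _

lemma maxBirk_measurable (hT : Measurable T) (hf : Measurable f) :
    ∀ N, Measurable (maxBirk T f N)
  | 0 => measurable_const
  | (N+1) => by
      have := maxBirk_measurable hT hf N
      exact measurable_const.max (hf.add (this.comp hT))

lemma maxBirk_integrable (ν : Measure X) [IsProbabilityMeasure ν]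
    (hT : MeasurePreserving T ν ν) (hfm : Measurable f) (hfi : Integrable f ν) :
    ∀ N, Integrable (maxBirk T f N) ν
  | 0 => by simpa [maxBirk] using integrable_zero X ℝ ν
  | (N+1) => by
      have hN := maxBirk_integrable ν hT hfm hfi N
      have hcomp : Integrable (fun x => maxBirk T f N (T x)) ν := by
        have := (hT.integrable_comp (maxBirk_measurable hT.measurable hfm N).aestronglyMeasurable).mpr hN
        exact this
      have : Integrable (fun x => f x + maxBirk T f N (T x)) ν := hfi.add hcomp
      have := this.pos_part
      exact (by simpa [maxBirk_succ, max_comm] using this : Integrable (fun x => max 0 (f x + maxBirk T f N (T x))) ν)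

/-- Garsia's maximal ergodic lemma, in the form needed. -/
lemma maximal (ν : Measure X) [IsProbabilityMeasure ν]
    (hT : MeasurePreserving T ν ν) (hfm : Measurable f) (hfb : ∀ x, |f x| ≤ 1)
    (hE : ∀ᵐ x ∂ν, ∃ n, 0 < ∑ i ∈ Finset.range n, f (T^[i] x)) :
    0 ≤ ∫ x, f x ∂ν := by
  have hTm := hT.measurable
  have hfi : Integrable f ν :=
    (integrable_const (1 : ℝ)).mono' hfm.aestronglyMeasurable
      (Eventually.of_forall fun x => by simpa using hfb x)
  set M := maxBirk T f with hM
  have hMmeas := maxBirk_measurable (f := f) hTm hfm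
  have hMint := maxBirk_integrable ν hT hfm hfi
  set E : ℕ → Set X := fun N => {x | 0 < M N x} with hEdef
  have hEmeas : ∀ N, MeasurableSet (E N) := fun N => measurableSet_lt measurable_const (hMmeas N)
  have hMcomp : ∀ N, Integrable (fun x => M N (T x)) ν := fun N =>
    (hT.integrable_comp (hMmeas N).aestronglyMeasurable).mpr (hMint N)
  have hintcomp : ∀ N, ∫ x, M N (T x) ∂ν = ∫ x, M N x ∂ν := by
    intro N
    rw [← integral_map hTm.aemeasurable (hMmeas N).aestronglyMeasurable, hT.map_eq]
  -- key pointwise inequality on E (N+1)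
  have hkey : ∀ N, ∀ x ∈ E (N+1), M (N+1) x - M (N+1) (T x) ≤ f x := by
    intro N x hx
    have hx' : 0 < M (N+1) x := hx
    have heq : M (N+1) x = f x + M N (T x) := by
      rw [hM, maxBirk_succ] at hx' ⊢
      rcases le_or_gt (f x + maxBirk T f N (T x)) 0 with h | h
      · exact absurd (max_eq_left h) (by intro hh; rw [hh] at hx'; exact lt_irrefl _ hx')
      · exact max_eq_right h.le
    have : M N (T x) ≤ M (N+1) (T x) := maxBirk_mono N (T x)
    linarith
  -- integral over E (N+1) of f is nonneg
  have hsetint : ∀ N, 0 ≤ ∫ x in E (N+1), f x ∂ν := by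
    intro N
    have h1 : ∫ x in E (N+1), (M (N+1) x - M (N+1) (T x)) ∂ν ≤ ∫ x in E (N+1), f x ∂ν := by
      apply setIntegral_mono_on
      · exact ((hMint (N+1)).sub (hMcomp (N+1))).integrableOn
      · exact hfi.integrableOn
      · exact hEmeas (N+1)
      · exact hkey N
    have h2 : ∫ x in E (N+1), (M (N+1) x - M (N+1) (T x)) ∂ν
        = ∫ x in E (N+1), M (N+1) x ∂ν - ∫ x in E (N+1), M (N+1) (T x) ∂ν :=
      integral_sub (hMint (N+1)).integrableOn (hMcomp (N+1)).integrableOn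
    have h3 : ∫ x in E (N+1), M (N+1) x ∂ν = ∫ x, M (N+1) x ∂ν := by
      rw [← integral_add_compl (hEmeas (N+1)) (hMint (N+1))]
      have hz : ∫ x in (E (N+1))ᶜ, M (N+1) x ∂ν = 0 := by
        have heq : Set.EqOn (M (N+1)) (fun _ => (0:ℝ)) (E (N+1))ᶜ := by
          intro x hx
          have h0 : ¬ 0 < M (N+1) x := hx
          exact le_antisymm (not_lt.mp h0) (maxBirk_nonneg (N+1) x)
        rw [setIntegral_congr_fun (hEmeas (N+1)).compl heq]
        simp
      rw [hz, add_zero]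
    have h4 : ∫ x in E (N+1), M (N+1) (T x) ∂ν ≤ ∫ x, M (N+1) (T x) ∂ν :=
      setIntegral_le_integral (hMcomp (N+1))
        (Eventually.of_forall fun x => maxBirk_nonneg (N+1) (T x))
    have := hintcomp (N+1)
    linarith
  -- complement bound
  have hbound : ∀ N, -(ν ((E (N+1))ᶜ)).toReal ≤ ∫ x, f x ∂ν := by
    intro N
    have hsplit := integral_add_compl (hEmeas (N+1)) hfi
    have habs : ‖∫ x in (E (N+1))ᶜ, f x ∂ν‖ ≤ 1 * (ν ((E (N+1))ᶜ)).toReal := by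
      apply norm_setIntegral_le_of_norm_le_const
      · exact (measure_lt_top ν _)
      · intro x _; simpa using hfb x
    have : -(ν ((E (N+1))ᶜ)).toReal ≤ ∫ x in (E (N+1))ᶜ, f x ∂ν := by
      have := (abs_le.mp (by simpa using habs)).1
      linarith
    have h0 := hsetint N
    linarith
  -- the complements shrink to a null set
  have hmono : Monotone (fun N => E N) := by
    apply monotone_nat_of_le_succ
    intro N x hx
    exact lt_of_lt_of_le hx (maxBirk_mono N x)
  have hnull : ν (⋂ N, (E N)ᶜ) = 0 := by
    refine measure_mono_null ?_ (ae_iff.mp hE)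
    intro x hx
    simp only [Set.mem_iInter, Set.mem_compl_iff] at hx
    simp only [Set.mem_setOf_eq, not_exists]
    intro n hn
    exact hx n (lt_of_lt_of_le hn (sum_le_maxBirk n n le_rfl x))
  have htend : Tendsto (fun N => ν ((E N)ᶜ)) atTop (𝓝 0) := by
    have := tendsto_measure_iInter_atTop (μ := ν) (s := fun N => (E N)ᶜ)
      (fun N => (hEmeas N).compl.nullMeasurableSet)
      (fun a b hab => Set.compl_subset_compl.mpr (hmono hab))
      ⟨0, measure_ne_top ν _⟩
    rwa [hnull] at this
  have htoReal : Tendsto (fun N => -(ν ((E (N+1))ᶜ)).toReal) atTop (𝓝 0) := by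
    have hne : (0:ENNReal) ≠ ⊤ := by simp
    have h1 : Tendsto (fun N => (ν ((E N)ᶜ)).toReal) atTop (𝓝 0) := by
      have := (ENNReal.tendsto_toReal hne).comp htend
      simpa [Function.comp_def] using this
    have h2 : Tendsto (fun N : ℕ => (ν ((E (N+1))ᶜ)).toReal) atTop (𝓝 0) :=
      h1.comp (tendsto_add_atTop_nat 1)
    have h3 := h2.neg
    simpa using h3
  exact le_of_tendsto htoReal (Eventually.of_forall hbound)


lemma liminf_le_liminf_of_close {u v : ℕ → ℝ}
    (hu0 : ∀ n, 0 ≤ u n) (hv0 : ∀ n, 0 ≤ v n) (hv1 : ∀ n, v n ≤ 1)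
    (h : Tendsto (fun n => u n - v n) atTop (𝓝 0)) :
    liminf u atTop ≤ liminf v atTop := by
  have hbu : IsBoundedUnder (· ≥ ·) atTop u := isBoundedUnder_of ⟨0, fun n => hu0 n⟩
  have hbv : IsCoboundedUnder (· ≥ ·) atTop v :=
    (isBoundedUnder_of ⟨1, fun n => hv1 n⟩).isCoboundedUnder_ge
  have hbv' : IsBoundedUnder (· ≥ ·) atTop v := isBoundedUnder_of ⟨0, fun n => hv0 n⟩
  apply le_of_forall_pos_le_add
  intro ε hε
  have hev : ∀ᶠ n in atTop, u n ≤ v n + ε := by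
    filter_upwards [Metric.tendsto_nhds.mp h ε hε] with n hn
    have : |u n - v n| < ε := by simpa [Real.dist_eq] using hn
    linarith [(abs_lt.mp this).2]
  have hbvε : IsCoboundedUnder (· ≥ ·) atTop (fun n => v n + ε) :=
    (isBoundedUnder_of ⟨1 + ε, fun n => by have := hv1 n; linarith⟩).isCoboundedUnder_ge
  calc liminf u atTop ≤ liminf (fun n => v n + ε) atTop :=
        liminf_le_liminf hev hbu hbvε
    _ = liminf v atTop + ε := liminf_add_const atTop v ε hbv hbv'

lemma liminf_eq_liminf_of_close {u v : ℕ → ℝ}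
    (hu0 : ∀ n, 0 ≤ u n) (hu1 : ∀ n, u n ≤ 1)
    (hv0 : ∀ n, 0 ≤ v n) (hv1 : ∀ n, v n ≤ 1)
    (h : Tendsto (fun n => u n - v n) atTop (𝓝 0)) :
    liminf u atTop = liminf v atTop :=
  le_antisymm (liminf_le_liminf_of_close hu0 hv0 hv1 h)
    (liminf_le_liminf_of_close hv0 hu0 hu1 (by simpa using h.neg))

section

noncomputable def freqAvg (T : X → X) (G' : Set X) (n : ℕ) (x : X) : ℝ :=
  (∑ i ∈ Finset.range n, Set.indicator G' (fun _ => (1:ℝ)) (T^[i] x)) / n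

lemma indicator_nonneg' (G' : Set X) (y : X) : 0 ≤ Set.indicator G' (fun _ => (1:ℝ)) y :=
  Set.indicator_nonneg (fun _ _ => zero_le_one) y

lemma indicator_le_one' (G' : Set X) (y : X) : Set.indicator G' (fun _ => (1:ℝ)) y ≤ 1 := by
  by_cases h : y ∈ G' <;> simp [Set.indicator_apply, h]

lemma freqAvg_nonneg (T : X → X) (G' : Set X) (n : ℕ) (x : X) : 0 ≤ freqAvg T G' n x :=
  div_nonneg (Finset.sum_nonneg fun i _ => indicator_nonneg' G' _) (Nat.cast_nonneg n)

lemma freqAvg_le_one (T : X → X) (G' : Set X) (n : ℕ) (x : X) : freqAvg T G' n x ≤ 1 := by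
  rcases Nat.eq_zero_or_pos n with h | h
  · simp [freqAvg, h]
  · rw [freqAvg, div_le_one (by exact_mod_cast h)]
    calc (∑ i ∈ Finset.range n, Set.indicator G' (fun _ => (1:ℝ)) (T^[i] x))
        ≤ ∑ i ∈ Finset.range n, 1 := Finset.sum_le_sum fun i _ => indicator_le_one' G' _
      _ = n := by simp

lemma freqAvg_comp_sub (T : X → X) (G' : Set X) (n : ℕ) (x : X) :
    |freqAvg T G' n (T x) - freqAvg T G' n x| ≤ 2 / n := by
  set g := Set.indicator G' (fun _ => (1:ℝ)) with hg
  rcases Nat.eq_zero_or_pos n with h | h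
  · simp [freqAvg, h]
  · have hnum : (∑ i ∈ Finset.range n, g (T^[i] (T x)))
        = (∑ i ∈ Finset.range n, g (T^[i] x)) + g (T^[n] x) - g x := by
      have h1 : ∑ i ∈ Finset.range (n+1), g (T^[i] x)
          = (∑ i ∈ Finset.range n, g (T^[i] (T x))) + g x := by
        rw [Finset.sum_range_succ']
        simp [Function.iterate_succ_apply]
      have h2 : ∑ i ∈ Finset.range (n+1), g (T^[i] x)
          = (∑ i ∈ Finset.range n, g (T^[i] x)) + g (T^[n] x) := Finset.sum_range_succ _ _
      linarith
    have habs : |g (T^[n] x) - g x| ≤ 2 := by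
      have h1 := indicator_nonneg' G' (T^[n] x)
      have h2 := indicator_le_one' G' (T^[n] x)
      have h3 := indicator_nonneg' G' x
      have h4 := indicator_le_one' G' x
      rw [abs_le]
      constructor <;> linarith
    rw [freqAvg, freqAvg, hnum]
    have : ((∑ i ∈ Finset.range n, g (T^[i] x)) + g (T^[n] x) - g x) / ↑n
        - (∑ i ∈ Finset.range n, g (T^[i] x)) / ↑n = (g (T^[n] x) - g x) / n := by
      ring
    rw [this, abs_div, abs_of_nonneg (by positivity : (0:ℝ) ≤ (n:ℝ))]
    gcongr

lemma liminf_freqAvg_comp (T : X → X) (G' : Set X) (x : X) :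
    liminf (fun n => freqAvg T G' n (T x)) atTop = liminf (fun n => freqAvg T G' n x) atTop := by
  apply liminf_eq_liminf_of_close (fun n => freqAvg_nonneg T G' n (T x))
    (fun n => freqAvg_le_one T G' n (T x)) (fun n => freqAvg_nonneg T G' n x)
    (fun n => freqAvg_le_one T G' n x)
  apply squeeze_zero_norm (fun n => freqAvg_comp_sub T G' n x)
  exact tendsto_const_div_atTop_nhds_zero_nat 2

end
lemma ae_liminf_freq_ge (ν : Measure X) [IsProbabilityMeasure ν] {T : X → X}
    (herg : Ergodic T ν) {G' : Set X} (hGm : MeasurableSet G')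
    {t : ℝ} (ht0 : 0 ≤ t) (ht : t < (ν G').toReal) :
    ∀ᵐ x ∂ν, t ≤ liminf (fun n => freqAvg T G' n x) atTop := by
  have hTm : Measurable T := herg.toMeasurePreserving.measurable
  set g := Set.indicator G' (fun _ => (1:ℝ)) with hgdef
  have hgm : Measurable g := measurable_const.indicator hGm
  have hAmeas : ∀ n, Measurable (fun x => freqAvg T G' n x) := by
    intro n
    apply Measurable.div_const
    exact Finset.measurable_sum _ fun i _ => hgm.comp (hTm.iterate i)
  set l : X → ℝ := fun x => liminf (fun n => freqAvg T G' n x) atTop with hldef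
  have hlm : Measurable l := Measurable.liminf hAmeas
  set L : Set X := {x | l x < t} with hLdef
  have hLm : MeasurableSet L := measurableSet_lt hlm measurable_const
  have hpre : T ⁻¹' L = L := by
    ext x
    simp only [Set.mem_preimage, hLdef, Set.mem_setOf_eq, hldef]
    rw [liminf_freqAvg_comp T G' x]
  rcases herg.toPreErgodic.prob_eq_zero_or_one hLm hpre with h0 | h1
  · have hae : ∀ᵐ x ∂ν, x ∉ L := by
      rw [ae_iff]; simpa using h0
    filter_upwards [hae] with x hx
    exact not_lt.mp hx
  · exfalso
    have htop : (ν G').toReal ≤ 1 := by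
      have h := prob_le_one (μ := ν) (s := G')
      have h2 := ENNReal.toReal_mono (by simp) h
      simpa using h2
    set f : X → ℝ := fun y => t - g y with hfdef
    have hfm : Measurable f := measurable_const.sub hgm
    have hfb : ∀ x, |f x| ≤ 1 := by
      intro x
      have h1 := indicator_nonneg' G' x
      have h2 := indicator_le_one' G' x
      rw [hfdef]
      rw [abs_le]
      constructor
      · simp only [neg_le_sub_iff_le_add, ← hgdef]
        linarith
      · simp only [sub_le_iff_le_add, ← hgdef]
        linarith
    have hL1 : ∀ᵐ x ∂ν, x ∈ L := by
      have hc : ν Lᶜ = 0 := by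
        rw [measure_compl hLm (measure_ne_top ν L), h1]; simp
      rw [ae_iff]; exact hc
    have hE : ∀ᵐ x ∂ν, ∃ n, 0 < ∑ i ∈ Finset.range n, f (T^[i] x) := by
      filter_upwards [hL1] with x hx
      have hx' : l x < t := hx
      have hfreq : ∃ᶠ n in atTop, freqAvg T G' n x < t :=
        frequently_lt_of_liminf_lt
          ((isBoundedUnder_of ⟨1, fun n => freqAvg_le_one T G' n x⟩).isCoboundedUnder_ge) hx'
      obtain ⟨n, hn1, hnlt⟩ := frequently_atTop.mp hfreq 1
      refine ⟨n, ?_⟩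
      have hnpos : (0:ℝ) < n := by exact_mod_cast hn1
      have hS : (∑ i ∈ Finset.range n, g (T^[i] x)) < n * t := by
        rw [freqAvg, div_lt_iff₀ hnpos] at hnlt
        calc (∑ i ∈ Finset.range n, g (T^[i] x)) < t * n := hnlt
          _ = n * t := mul_comm _ _
      have hsum : ∑ i ∈ Finset.range n, f (T^[i] x)
          = n * t - ∑ i ∈ Finset.range n, g (T^[i] x) := by
        rw [hfdef]
        rw [Finset.sum_sub_distrib, Finset.sum_const, Finset.card_range]
        simp [mul_comm]
      rw [hsum]
      linarith
    have h0int := maximal ν herg.toMeasurePreserving hfm hfb hE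
    have hgint : Integrable g ν := (integrable_const (1:ℝ)).indicator hGm
    have hint : ∫ x, f x ∂ν = t - (ν G').toReal := by
      rw [hfdef]
      rw [integral_sub (integrable_const t) hgint, integral_const]
      rw [hgdef, integral_indicator_const (1:ℝ) hGm]
      simp
      rfl
    rw [hint] at h0int
    linarith

end Stmt9Aux


open Classical in
/-- The density-one argument: in an ergodic system, if `|d(x,n) - 1| < ε` holds whenever
`r(x,n) < κ` and `Tⁿx ∈ G_{κ,ε}`, where `r(x,n) → 0` and `ν(G_{κ,ε}) → 1` as `κ → 0`,
then for `ν`-a.e. `x` and every `ε > 0` the set `{n : |d(x,n) - 1| < ε}` has natural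
density one. -/
theorem stmt9 {X : Type*} [MeasurableSpace X] (ν : Measure X) [IsProbabilityMeasure ν]
    (T : X → X) (herg : Ergodic T ν)
    (d : X → ℕ → ℝ) (hd : ∀ n, Measurable fun x => d x n)
    (G : ℝ → ℝ → Set X) (hGmeas : ∀ κ ε, MeasurableSet (G κ ε))
    (hG : ∀ ε > (0 : ℝ), Tendsto (fun κ => ν (G κ ε)) (𝓝[>] 0) (𝓝 1))
    (r : X → ℕ → ℝ) (hrpos : ∀ x n, 0 < r x n)
    (hr : ∀ x, Tendsto (fun n => r x n) atTop (𝓝 0))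
    (hkey : ∀ κ > (0 : ℝ), ∀ ε > (0 : ℝ), ∀ (x : X) (n : ℕ),
      r x n < κ → T^[n] x ∈ G κ ε → |d x n - 1| < ε) :
    ∀ᵐ x ∂ν, ∀ ε > (0 : ℝ),
      Tendsto
        (fun N : ℕ =>
          (((Finset.Icc 1 N).filter fun n => |d x n - 1| < ε).card : ℝ) / (N : ℝ))
        atTop (𝓝 1) := by
  have hεkpos : ∀ k : ℕ, (0:ℝ) < 1 / ((k:ℝ)+1) := fun k => by positivity
  -- choose κ's
  have hchoose : ∀ k j : ℕ, ∃ κ : ℝ, 0 < κ ∧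
      1 - 1/((j:ℝ)+2) < (ν (G κ (1/((k:ℝ)+1)))).toReal := by
    intro k j
    have h1 : Tendsto (fun κ => (ν (G κ (1/((k:ℝ)+1)))).toReal) (𝓝[>] (0:ℝ)) (𝓝 1) := by
      have h2 := (ENNReal.tendsto_toReal (by simp : (1:ENNReal) ≠ ⊤)).comp
        (hG (1/((k:ℝ)+1)) (hεkpos k))
      simpa [Function.comp_def] using h2
    have h3 : ∀ᶠ κ in 𝓝[>] (0:ℝ), 1 - 1/((j:ℝ)+2) < (ν (G κ (1/((k:ℝ)+1)))).toReal :=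
      h1.eventually_const_lt (by
        have : (0:ℝ) < 1/((j:ℝ)+2) := by positivity
        linarith)
    have h4 : ∀ᶠ κ in 𝓝[>] (0:ℝ), (0:ℝ) < κ :=
      eventually_mem_nhdsWithin.mono fun κ hκ => hκ
    exact (h4.and h3).exists
  choose κf hκpos hκval using hchoose
  have hae : ∀ᵐ x ∂ν, ∀ k j : ℕ, 1 - 1/((j:ℝ)+2) ≤
      liminf (fun n => Stmt9Aux.freqAvg T (G (κf k j) (1/((k:ℝ)+1))) n x) atTop := by
    rw [ae_all_iff]
    intro k
    rw [ae_all_iff]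
    intro j
    apply Stmt9Aux.ae_liminf_freq_ge ν herg (hGmeas _ _)
    · have h1 : 1/((j:ℝ)+2) ≤ 1/2 := by
        apply div_le_div_of_nonneg_left (by norm_num) (by norm_num)
        · push_cast; linarith [Nat.cast_nonneg (α := ℝ) j]
      linarith
    · exact hκval k j
  filter_upwards [hae] with x hx
  intro ε hε
  set u : ℕ → ℝ := fun N =>
    (((Finset.Icc 1 N).filter fun n => |d x n - 1| < ε).card : ℝ) / (N : ℝ) with hu
  have hu0 : ∀ N, 0 ≤ u N := fun N => by positivity
  have hu1 : ∀ N, u N ≤ 1 := by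
    intro N
    rcases Nat.eq_zero_or_pos N with h | h
    · simp [hu, h]
    · rw [hu]
      apply div_le_one_of_le₀ ?_ (by positivity)
      have hc : ((Finset.Icc 1 N).filter fun n => |d x n - 1| < ε).card ≤ N := by
        calc ((Finset.Icc 1 N).filter fun n => |d x n - 1| < ε).card
            ≤ (Finset.Icc 1 N).card := Finset.card_filter_le _ _
          _ = N := by rw [Nat.card_Icc]; omega
      exact_mod_cast hc
  obtain ⟨k, hk⟩ := exists_nat_one_div_lt hε
  have hlb : ∀ η > (0:ℝ), ∀ᶠ N in atTop, 1 - η < u N := by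
    intro η hη
    obtain ⟨j, hj⟩ := exists_nat_one_div_lt (half_pos hη)
    have hj2 : 1/((j:ℝ)+2) < η/2 := by
      refine lt_of_le_of_lt ?_ hj
      apply div_le_div_of_nonneg_left (by norm_num) (by positivity)
      linarith
    set κ := κf k j with hκ
    set Gs := G κ (1/((k:ℝ)+1)) with hGs
    set g := Set.indicator Gs (fun _ => (1:ℝ)) with hg
    have hxl := hx k j
    -- eventually r x n < κ
    obtain ⟨n₀, hn₀⟩ := eventually_atTop.mp ((hr x).eventually_lt_const (hκpos k j))
    have hmain : ∀ N : ℕ, 1 ≤ N →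
        Stmt9Aux.freqAvg T Gs (N+1) x - (1 + (n₀:ℝ))/N ≤ u N := by
      intro N hN
      have hNpos : (0:ℝ) < N := by exact_mod_cast hN
      have himp : ∀ n : ℕ, (T^[n] x ∈ Gs ∧ n₀ ≤ n) → |d x n - 1| < ε := by
        intro n hn
        have := hkey κ (hκpos k j) (1/((k:ℝ)+1)) (hεkpos k) x n (hn₀ n hn.2) hn.1
        linarith
      have hsub1 : (Finset.Icc 1 N).filter (fun n => T^[n] x ∈ Gs ∧ n₀ ≤ n)
          ⊆ (Finset.Icc 1 N).filter (fun n => |d x n - 1| < ε) :=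
        Finset.monotone_filter_right _ (fun n _ => himp n)
      have hcard1 : ((Finset.Icc 1 N).filter (fun n => T^[n] x ∈ Gs ∧ n₀ ≤ n)).card
          ≤ ((Finset.Icc 1 N).filter (fun n => |d x n - 1| < ε)).card :=
        Finset.card_le_card hsub1
      have hsub2 : (Finset.Icc 1 N).filter (fun n => T^[n] x ∈ Gs)
          ⊆ ((Finset.Icc 1 N).filter (fun n => T^[n] x ∈ Gs ∧ n₀ ≤ n)) ∪ Finset.range n₀ := by
        intro n hn
        rw [Finset.mem_filter] at hn
        by_cases h : n₀ ≤ n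
        · exact Finset.mem_union_left _ (Finset.mem_filter.mpr ⟨hn.1, hn.2, h⟩)
        · exact Finset.mem_union_right _ (Finset.mem_range.mpr (not_le.mp h))
      have hcard2 : ((Finset.Icc 1 N).filter (fun n => T^[n] x ∈ Gs)).card
          ≤ ((Finset.Icc 1 N).filter (fun n => T^[n] x ∈ Gs ∧ n₀ ≤ n)).card + n₀ := by
        calc ((Finset.Icc 1 N).filter (fun n => T^[n] x ∈ Gs)).card
            ≤ (((Finset.Icc 1 N).filter (fun n => T^[n] x ∈ Gs ∧ n₀ ≤ n)) ∪ Finset.range n₀).card :=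
              Finset.card_le_card hsub2
          _ ≤ _ := by
              have := Finset.card_union_le
                ((Finset.Icc 1 N).filter (fun n => T^[n] x ∈ Gs ∧ n₀ ≤ n)) (Finset.range n₀)
              simpa using this
      -- the visit count as a sum
      have hsum1 : (((Finset.Icc 1 N).filter (fun n => T^[n] x ∈ Gs)).card : ℝ)
          = ∑ i ∈ Finset.range N, g (T^[i+1] x) := by
        rw [Finset.card_filter]
        push_cast
        rw [← Finset.Ico_add_one_right_eq_Icc, Finset.sum_Ico_eq_sum_range]
        apply Finset.sum_congr rfl
        intro i _
        rw [hg, Set.indicator_apply]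
        by_cases h : T^[1+i] x ∈ Gs <;> simp [h, add_comm 1 i] <;> congr
      have hsum2 : ∑ i ∈ Finset.range (N+1), g (T^[i] x)
          = (∑ i ∈ Finset.range N, g (T^[i+1] x)) + g x := by
        rw [Finset.sum_range_succ']
        simp
      have hgx0 : 0 ≤ g x := Stmt9Aux.indicator_nonneg' Gs x
      have hgx1 : g x ≤ 1 := Stmt9Aux.indicator_le_one' Gs x
      set S := ∑ i ∈ Finset.range (N+1), g (T^[i] x) with hS
      have hS0 : 0 ≤ S := Finset.sum_nonneg fun i _ => Stmt9Aux.indicator_nonneg' Gs _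
      have hfa : Stmt9Aux.freqAvg T Gs (N+1) x = S / ((N:ℝ)+1) := by
        rw [Stmt9Aux.freqAvg, hS]
        norm_num
        rfl
      -- combine over ℝ
      have hchain : S - 1 - n₀ ≤
          (((Finset.Icc 1 N).filter (fun n => |d x n - 1| < ε)).card : ℝ) := by
        have h1 : (((Finset.Icc 1 N).filter (fun n => T^[n] x ∈ Gs)).card : ℝ)
            ≤ (((Finset.Icc 1 N).filter (fun n => T^[n] x ∈ Gs ∧ n₀ ≤ n)).card : ℝ) + n₀ := by
          exact_mod_cast hcard2
        have h2 : (((Finset.Icc 1 N).filter (fun n => T^[n] x ∈ Gs ∧ n₀ ≤ n)).card : ℝ)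
            ≤ (((Finset.Icc 1 N).filter (fun n => |d x n - 1| < ε)).card : ℝ) := by
          exact_mod_cast hcard1
        have h3 : S - 1 ≤ (((Finset.Icc 1 N).filter (fun n => T^[n] x ∈ Gs)).card : ℝ) := by
          rw [hsum1]
          linarith [hsum2]
        linarith
      rw [hu, hfa]
      have hA : S / ((N:ℝ)+1) ≤ S / (N:ℝ) := by gcongr <;> linarith
      have hfinal : (S - 1 - (n₀:ℝ))/(N:ℝ)
          ≤ (((Finset.Icc 1 N).filter fun n => |d x n - 1| < ε).card : ℝ) / (N:ℝ) := by
        gcongr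
      have heq : (S - 1 - (n₀:ℝ))/(N:ℝ) = S/(N:ℝ) - (1 + (n₀:ℝ))/(N:ℝ) := by ring
      linarith
    have hc : (0:ℝ) < 1/((j:ℝ)+2) := by positivity
    have hev1 : ∀ᶠ n in atTop, 1 - 1/((j:ℝ)+2) - η/4 < Stmt9Aux.freqAvg T Gs n x := by
      apply eventually_lt_of_lt_liminf
      · exact lt_of_lt_of_le (by linarith) hxl
      · exact isBoundedUnder_of ⟨0, fun n => Stmt9Aux.freqAvg_nonneg T Gs n x⟩
    have hev1' : ∀ᶠ N in atTop, 1 - 1/((j:ℝ)+2) - η/4 < Stmt9Aux.freqAvg T Gs (N+1) x :=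
      (tendsto_add_atTop_nat 1).eventually hev1
    have hev2 : ∀ᶠ N : ℕ in atTop, (1 + (n₀:ℝ))/(N:ℝ) < η/4 :=
      (tendsto_const_div_atTop_nhds_zero_nat (1 + (n₀:ℝ))).eventually_lt_const (by linarith)
    filter_upwards [hev1', hev2, eventually_ge_atTop 1] with N h1 h2 h3
    have hm := hmain N h3
    linarith
  -- conclude tendsto
  have hbdd : IsBoundedUnder (· ≤ ·) atTop u := isBoundedUnder_of ⟨1, hu1⟩
  have hbdd' : IsBoundedUnder (· ≥ ·) atTop u := isBoundedUnder_of ⟨0, hu0⟩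
  apply tendsto_of_le_liminf_of_limsup_le
  · apply le_of_forall_sub_le
    intro η hη
    exact le_liminf_of_le hbdd.isCoboundedUnder_ge
      ((hlb η hη).mono fun N h => h.le)
  · exact limsup_le_of_le hbdd'.isCoboundedUnder_le (Eventually.of_forall hu1)
  · exact hbdd
  · exact hbdd'
end
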